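/- Let H satisfy the second no-resonance condition with eigenbasis {|E⟩}, let |Ψ₀⟩ and |z⟩ be unit vectors with p_avg(z) = Σ_E |⟨z|E⟩⟨E|Ψ₀⟩|² > 0. Then the infinite-time average of p̃(z,t)² equals 2 − Σ_E |⟨z|E⟩⟨E|Ψ₀⟩|⁴ / p_avg(z)², where p̃(z,t) = |⟨z|e^{-iHt}|Ψ₀⟩|²/p_avg(z). -/

import Mathlib

open Filter
open scoped BigOperators

/-- The `k`-th no-resonance condition for eigenvalues `E : Fin D → ℝ`. -/
def NoResonance {D : ℕ} (E : Fin D → ℝ) (k : ℕ) : Prop :=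
  ∀ α β : Fin k → Fin D,
    (∑ i, E (α i)) = (∑ i, E (β i)) →
    Multiset.map α Finset.univ.val = Multiset.map β Finset.univ.val

/-- `HasTimeAvg f L` : the infinite-time average `lim_{T→∞} (1/T)∫_0^T f(t) dt` equals `L`. -/
def HasTimeAvg (f : ℝ → ℝ) (L : ℝ) : Prop :=
  Tendsto (fun T : ℝ => (1 / T) * ∫ t in (0:ℝ)..T, f t) atTop (nhds L)

/-- The amplitude `⟨z|e^{-iHt}|Ψ₀⟩ = ∑_j ⟨z|E_j⟩ e^{-iE_j t} ⟨E_j|Ψ₀⟩` in the eigenbasis `v`. -/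
noncomputable def amp {D : ℕ} (E : Fin D → ℝ) (v : Fin D → EuclideanSpace ℂ (Fin D))
    (z Ψ₀ : EuclideanSpace ℂ (Fin D)) (t : ℝ) : ℂ :=
  ∑ j, (inner ℂ z (v j) : ℂ) * Complex.exp (-Complex.I * (E j : ℂ) * (t : ℂ)) *
    (inner ℂ (v j) Ψ₀ : ℂ)

/-- `p_avg(z) = ∑_E |⟨z|E⟩⟨E|Ψ₀⟩|²`. -/
noncomputable def pavg {D : ℕ} (v : Fin D → EuclideanSpace ℂ (Fin D))
    (z Ψ₀ : EuclideanSpace ℂ (Fin D)) : ℝ :=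
  ∑ j, (‖(inner ℂ z (v j) : ℂ) * (inner ℂ (v j) Ψ₀ : ℂ)‖) ^ 2

lemma hasTimeAvg_term (b : ℂ) (ω : ℝ) :
    HasTimeAvg (fun t => (b * Complex.exp (Complex.I * ω * t)).re)
      (if ω = 0 then b.re else 0) := by
  have hre : ∀ T : ℝ, (∫ t in (0:ℝ)..T, (b * Complex.exp (Complex.I * ω * t)).re)
      = (∫ t in (0:ℝ)..T, b * Complex.exp (Complex.I * ω * t)).re := by
    intro T
    have hInt : IntervalIntegrable (fun t : ℝ => b * Complex.exp (Complex.I * ω * t))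
        MeasureTheory.volume 0 T := (Continuous.intervalIntegrable (by continuity) 0 T)
    simpa using Complex.reCLM.intervalIntegral_comp_comm hInt
  unfold HasTimeAvg
  simp only [hre]
  by_cases hω : ω = 0
  · subst hω
    simp only [if_pos rfl]
    have heq : ∀ᶠ T : ℝ in atTop,
        b.re = (1 / T) * (∫ t in (0:ℝ)..T, b * Complex.exp (Complex.I * 0 * t)).re := by
      filter_upwards [eventually_gt_atTop (0:ℝ)] with T hT
      have h2 : (fun t : ℝ => b * Complex.exp (Complex.I * 0 * t)) = fun _ => b := by
        funext t; simp
      rw [h2, intervalIntegral.integral_const]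
      simp [Complex.smul_re]
      field_simp
    exact Tendsto.congr' heq tendsto_const_nhds
  · simp only [if_neg hω]
    have hc : (Complex.I * ω) ≠ 0 := by
      simp [Complex.I_ne_zero, Complex.ofReal_eq_zero, hω]
    have hint : ∀ T : ℝ, (∫ t in (0:ℝ)..T, b * Complex.exp (Complex.I * ω * t))
        = b * ((Complex.exp (Complex.I * ω * T) - 1) / (Complex.I * ω)) := by
      intro T
      rw [intervalIntegral.integral_const_mul, integral_exp_mul_complex hc]
      simp
    simp only [hint]
    apply squeeze_zero_norm' (a := fun T => (1/T) * (‖b‖ * (2 / ‖Complex.I * ω‖)))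
    · filter_upwards [eventually_gt_atTop (0:ℝ)] with T hT
      have h1 : |(1/T) * (b * ((Complex.exp (Complex.I * ω * T) - 1) / (Complex.I * ω))).re|
          ≤ (1/T) * ‖b * ((Complex.exp (Complex.I * ω * T) - 1) / (Complex.I * ω))‖ := by
        rw [abs_mul, abs_of_pos (by positivity : (0:ℝ) < 1/T)]
        gcongr
        exact Complex.abs_re_le_norm _
      refine h1.trans ?_
      rw [mul_le_mul_iff_right₀ (by positivity : (0:ℝ) < 1/T)]
      rw [norm_mul, norm_div]
      gcongr
      calc ‖Complex.exp (Complex.I * ω * T) - 1‖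
          ≤ ‖Complex.exp (Complex.I * ω * T)‖ + ‖(1:ℂ)‖ :=
            norm_sub_le _ _
        _ ≤ 2 := by
            rw [Complex.norm_exp]
            have h5 : (Complex.I * ω * T).re = 0 := by simp
            rw [h5, Real.exp_zero, norm_one]; norm_num
    · have h6 : Tendsto (fun T : ℝ => 1/T) atTop (nhds 0) := by
        simpa [one_div] using (tendsto_inv_atTop_zero : Tendsto (fun x : ℝ => x⁻¹) atTop (nhds 0))
      simpa using h6.mul_const (‖b‖ * (2 / ‖Complex.I * ω‖))

lemma hasTimeAvg_sum {ι : Type*} (s : Finset ι) (f : ι → ℝ → ℝ) (L : ι → ℝ)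
    (hcont : ∀ i, Continuous (f i)) (h : ∀ i ∈ s, HasTimeAvg (f i) (L i)) :
    HasTimeAvg (fun t => ∑ i ∈ s, f i t) (∑ i ∈ s, L i) := by
  unfold HasTimeAvg at *
  have key : ∀ T : ℝ, (1 / T) * ∫ t in (0:ℝ)..T, ∑ i ∈ s, f i t
      = ∑ i ∈ s, (1 / T) * ∫ t in (0:ℝ)..T, f i t := by
    intro T
    rw [intervalIntegral.integral_finset_sum
      (fun i _ => (hcont i).intervalIntegrable 0 T), Finset.mul_sum]
  simp only [key]
  exact tendsto_finset_sum _ h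

lemma pair_multiset_eq {α : Type*} {a b c d : α} (h : ({a, b} : Multiset α) = {c, d}) :
    (a = c ∧ b = d) ∨ (a = d ∧ b = c) := by
  have ha : a ∈ ({c, d} : Multiset α) := by rw [← h]; simp
  simp only [Multiset.insert_eq_cons, Multiset.mem_cons, Multiset.mem_singleton] at ha
  rcases ha with h1 | h1
  · subst h1
    left
    refine ⟨rfl, ?_⟩
    have h2 := (Multiset.cons_inj_right a).mp h
    simpa using h2
  · subst h1
    right
    refine ⟨rfl, ?_⟩
    rw [Multiset.pair_comm c a] at h
    have h2 := (Multiset.cons_inj_right a).mp h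
    simpa using h2

/-- For `H` satisfying the second no-resonance condition, with unit vectors `z`, `Ψ₀` and
`p_avg(z) > 0`, the infinite-time average of `p̃(z,t)²` equals
`2 − (∑_E |⟨z|E⟩⟨E|Ψ₀⟩|⁴) / p_avg(z)²`. -/
theorem timeAvg_ptilde_sq {D : ℕ} (E : Fin D → ℝ) (hE : NoResonance E 2)
    (v : Fin D → EuclideanSpace ℂ (Fin D)) (hv : Orthonormal ℂ v)
    (z Ψ₀ : EuclideanSpace ℂ (Fin D)) (hz : ‖z‖ = 1) (hΨ : ‖Ψ₀‖ = 1)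
    (hpos : 0 < pavg v z Ψ₀) :
    HasTimeAvg
      (fun t => ((‖amp E v z Ψ₀ t‖) ^ 2 / pavg v z Ψ₀) ^ 2)
      (2 - (∑ j, (‖(inner ℂ z (v j) : ℂ) * (inner ℂ (v j) Ψ₀ : ℂ)‖) ^ 4) /
        (pavg v z Ψ₀) ^ 2) := by
  classical
  set p : ℝ := pavg v z Ψ₀ with hp
  set c : Fin D → ℂ := fun j => (inner ℂ z (v j) : ℂ) * (inner ℂ (v j) Ψ₀ : ℂ) with hc
  set d : Fin D × Fin D → ℂ := fun q => c q.1 * c q.2 with hd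
  set ω : Fin D × Fin D → ℝ := fun q => E q.1 + E q.2 with hω
  set ν : (Fin D × Fin D) × (Fin D × Fin D) → ℝ := fun i => ω i.2 - ω i.1 with hν
  set b : (Fin D × Fin D) × (Fin D × Fin D) → ℂ :=
    fun i => (((p^2)⁻¹ : ℝ) : ℂ) * (d i.1 * (starRingEnd ℂ) (d i.2)) with hb
  have hpne : p ≠ 0 := ne_of_gt hpos
  -- step 1: squared amplitude expansion
  have hamp2 : ∀ t : ℝ, (amp E v z Ψ₀ t)^2
      = ∑ q : Fin D × Fin D, d q * Complex.exp (-Complex.I * (ω q : ℂ) * (t : ℂ)) := by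
    intro t
    have hA : amp E v z Ψ₀ t = ∑ j, c j * Complex.exp (-Complex.I * (E j : ℂ) * (t : ℂ)) := by
      unfold amp
      refine Finset.sum_congr rfl fun j _ => ?_
      simp only [hc]; ring
    rw [hA, sq, Finset.sum_mul_sum, Fintype.sum_prod_type]
    refine Finset.sum_congr rfl fun j _ => Finset.sum_congr rfl fun l _ => ?_
    simp only [hd, hω]
    rw [mul_mul_mul_comm, ← Complex.exp_add]
    congr 1
    push_cast
    ring
  -- step 2: |amp|⁴ expansion
  have hG : ∀ t : ℝ, ((‖amp E v z Ψ₀ t‖) ^ 2 / p) ^ 2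
      = ∑ i : (Fin D × Fin D) × (Fin D × Fin D),
          (b i * Complex.exp (Complex.I * (ν i : ℂ) * (t : ℂ))).re := by
    intro t
    set a : ℂ := amp E v z Ψ₀ t with ha
    have h4 : (‖a‖ ^ 2 / p) ^ 2 = (p^2)⁻¹ * Complex.normSq (a^2) := by
      rw [div_pow, ← pow_mul, map_pow Complex.normSq, ← Complex.sq_norm]
      ring
    have hprod : a^2 * (starRingEnd ℂ) (a^2)
        = ∑ i : (Fin D × Fin D) × (Fin D × Fin D),
            (d i.1 * (starRingEnd ℂ) (d i.2)) * Complex.exp (Complex.I * (ν i : ℂ) * (t : ℂ)) := by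
      have hsq : a^2 = ∑ q : Fin D × Fin D, d q * Complex.exp (-Complex.I * (ω q : ℂ) * (t : ℂ)) := by
        rw [ha]; exact hamp2 t
      rw [hsq]
      rw [map_sum (starRingEnd ℂ)
        (fun q : Fin D × Fin D => d q * Complex.exp (-Complex.I * (ω q : ℂ) * (t : ℂ)))
        Finset.univ]
      rw [Finset.sum_mul_sum]
      rw [Fintype.sum_prod_type (f := fun i : (Fin D × Fin D) × (Fin D × Fin D) =>
        (d i.1 * (starRingEnd ℂ) (d i.2)) * Complex.exp (Complex.I * (ν i : ℂ) * (t : ℂ)))]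
      refine Finset.sum_congr rfl fun q _ => Finset.sum_congr rfl fun r _ => ?_
      rw [map_mul, ← Complex.exp_conj]
      rw [mul_mul_mul_comm, ← Complex.exp_add]
      congr 1
      simp only [map_mul, map_neg, Complex.conj_I, Complex.conj_ofReal, hν]
      push_cast
      ring
    have h5 : Complex.normSq (a^2) = (∑ i : (Fin D × Fin D) × (Fin D × Fin D),
        (d i.1 * (starRingEnd ℂ) (d i.2)) * Complex.exp (Complex.I * (ν i : ℂ) * (t : ℂ))).re := by
      rw [← hprod, Complex.mul_conj, Complex.ofReal_re]
    rw [h4, h5, Complex.re_sum, Finset.mul_sum]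
    refine Finset.sum_congr rfl fun i _ => ?_
    simp only [hb, mul_assoc, Complex.re_ofReal_mul]
  -- step 3: value of the limit
  have hval : (∑ i : (Fin D × Fin D) × (Fin D × Fin D),
        (if ν i = 0 then (b i).re else 0))
      = 2 - (∑ j, (‖c j‖) ^ 4) / p ^ 2 := by
    have key : ∀ q r : Fin D × Fin D, ω r = ω q ↔ (r = q ∨ r = q.swap) := by
      intro q r
      constructor
      · intro h
        have hs : (∑ i, E (![r.1, r.2] i)) = ∑ i, E (![q.1, q.2] i) := by
          simpa [Fin.sum_univ_two, hω] using h
        have hm := hE ![r.1, r.2] ![q.1, q.2] hs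
        have huniv : (Finset.univ.val : Multiset (Fin 2)) = {0, 1} := rfl
        rw [huniv] at hm
        simp only [Multiset.insert_eq_cons, Multiset.map_cons, Multiset.map_singleton,
          Matrix.cons_val_zero, Matrix.cons_val_one, Matrix.head_cons] at hm
        rcases pair_multiset_eq hm with ⟨h1, h2⟩ | ⟨h1, h2⟩
        · left; exact Prod.ext h1 h2
        · right; exact Prod.ext h1 h2
      · rintro (rfl | h)
        · rfl
        · subst h; simp only [hω]; exact add_comm _ _
    have hstep : ∀ q : Fin D × Fin D,
        (∑ r : Fin D × Fin D, if ν (q, r) = 0 then (b (q, r)).re else 0)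
        = (p^2)⁻¹ * ((if q.1 = q.2 then (1:ℝ) else 2) * Complex.normSq (d q)) := by
      intro q
      have hcond : ∀ r : Fin D × Fin D, (ν (q, r) = 0) ↔ (r = q ∨ r = q.swap) := by
        intro r
        rw [hν]
        simp only [sub_eq_zero]
        exact key q r
      have hgre : ∀ r : Fin D × Fin D, (b (q, r)).re
          = (p^2)⁻¹ * (d q * (starRingEnd ℂ) (d r)).re := by
        intro r
        simp only [hb, Complex.re_ofReal_mul]
      by_cases hqq : q.1 = q.2
      · have hswap : q.swap = q := Prod.ext hqq.symm hqq
        have : (∑ r : Fin D × Fin D, if ν (q, r) = 0 then (b (q, r)).re else 0)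
            = ∑ r : Fin D × Fin D, if r = q then (b (q, r)).re else 0 := by
          refine Finset.sum_congr rfl fun r _ => ?_
          have h9 : (r = q ∨ r = q.swap) ↔ r = q := by
            rw [hswap, or_self]
          rw [if_congr ((hcond r).trans h9) rfl rfl]
        rw [this, Finset.sum_ite_eq' Finset.univ q, if_pos (Finset.mem_univ q), hgre,
          Complex.mul_conj, Complex.ofReal_re, if_pos hqq, one_mul]
      · have hne : q ≠ q.swap := by
          intro hcc
          exact hqq (congrArg Prod.snd hcc).symm
        have h7 : (∑ r : Fin D × Fin D, if ν (q, r) = 0 then (b (q, r)).re else 0)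
            = ∑ r ∈ ({q, q.swap} : Finset (Fin D × Fin D)), (b (q, r)).re := by
          have h8 : (∑ r : Fin D × Fin D, if ν (q, r) = 0 then (b (q, r)).re else 0)
              = ∑ r : Fin D × Fin D,
                if r ∈ ({q, q.swap} : Finset (Fin D × Fin D)) then (b (q, r)).re else 0 := by
            refine Finset.sum_congr rfl fun r _ => ?_
            have h9 : (r = q ∨ r = q.swap) ↔ r ∈ ({q, q.swap} : Finset (Fin D × Fin D)) := by
              simp only [Finset.mem_insert, Finset.mem_singleton]
            rw [if_congr ((hcond r).trans h9) rfl rfl]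
          rw [h8, Finset.sum_ite_mem, Finset.univ_inter]
        rw [h7, Finset.sum_pair hne, hgre, hgre]
        have hds : d q.swap = d q := by simp only [hd]; exact mul_comm _ _
        rw [hds, Complex.mul_conj, Complex.ofReal_re, if_neg hqq]
        ring
    have hpn : p = ∑ j, Complex.normSq (c j) := by
      rw [hp]
      unfold pavg
      refine Finset.sum_congr rfl fun j _ => ?_
      rw [hc]
      exact Complex.sq_norm _
    have hA : ∑ q : Fin D × Fin D, Complex.normSq (d q) = p^2 := by
      rw [Fintype.sum_prod_type (f := fun q : Fin D × Fin D => Complex.normSq (d q))]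
      simp only [hd, map_mul]
      rw [← Finset.sum_mul_sum, ← hpn, sq]
    have hB : (∑ q : Fin D × Fin D, if q.1 = q.2 then Complex.normSq (d q) else 0)
        = ∑ j, ‖c j‖ ^ 4 := by
      rw [Fintype.sum_prod_type (f := fun q : Fin D × Fin D =>
        if q.1 = q.2 then Complex.normSq (d q) else 0)]
      refine Finset.sum_congr rfl fun j _ => ?_
      have h14 : (∑ l, if (j, l).1 = (j, l).2 then Complex.normSq (d (j, l)) else 0)
          = ∑ l, if j = l then Complex.normSq (d (j, l)) else 0 := rfl
      rw [h14, Finset.sum_ite_eq Finset.univ j (fun l => Complex.normSq (d (j, l))),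
        if_pos (Finset.mem_univ j)]
      have : d (j, j) = c j * c j := rfl
      rw [this, map_mul, show (4:ℕ) = 2*2 from rfl, pow_mul, Complex.sq_norm]
      ring
    have h10 : (∑ i : (Fin D × Fin D) × (Fin D × Fin D), if ν i = 0 then (b i).re else 0)
        = (p^2)⁻¹ * (2 * p^2 - ∑ j, ‖c j‖ ^ 4) := by
      rw [Fintype.sum_prod_type (f := fun i : (Fin D × Fin D) × (Fin D × Fin D) =>
        if ν i = 0 then (b i).re else 0)]
      have h12 : (∑ q : Fin D × Fin D, ∑ r : Fin D × Fin D,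
            if ν (q, r) = 0 then (b (q, r)).re else 0)
          = ∑ q : Fin D × Fin D,
              (p^2)⁻¹ * ((if q.1 = q.2 then (1:ℝ) else 2) * Complex.normSq (d q)) :=
        Finset.sum_congr rfl fun q _ => hstep q
      rw [h12, ← Finset.mul_sum]
      congr 1
      have h13 : ∀ q : Fin D × Fin D, (if q.1 = q.2 then (1:ℝ) else 2) * Complex.normSq (d q)
          = 2 * Complex.normSq (d q) - (if q.1 = q.2 then Complex.normSq (d q) else 0) := by
        intro q
        by_cases h : q.1 = q.2
        · rw [if_pos h, if_pos h]; ring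
        · rw [if_neg h, if_neg h]; ring
      simp only [h13]
      rw [Finset.sum_sub_distrib, ← Finset.mul_sum, hA, hB]
    rw [h10]
    field_simp
  -- assemble
  have := hasTimeAvg_sum (Finset.univ)
    (fun i => fun t => (b i * Complex.exp (Complex.I * (ν i : ℂ) * (t : ℂ))).re)
    (fun i => if ν i = 0 then (b i).re else 0)
    (fun i => Complex.continuous_re.comp
      (continuous_const.mul (Complex.continuous_exp.comp
        (continuous_const.mul Complex.continuous_ofReal))))
    (fun i _ => hasTimeAvg_term (b i) (ν i))
  rw [hval] at this
  convert this using 2 with t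
  exact hG t
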